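/- Let q ≥ 3 be odd, and let E = qm + r with m, r natural numbers and 0 ≤ r ≤ q−1. With f as above (f(k) = 2(q+2)⌊k/q⌋ + 2(k mod q) + 2⌈2(k mod q)/q⌉ − 1 for q ∤ k, f(k) = 2(q+2)k/q − 1 for q ∣ k), one has q·∑_{k=1}^{E} f(k) = (q+2)E² + q(q+1)m − 2r² + 2qr + q·⌊2r/q⌋·(2r − q + 1). -/

import Mathlib

lemma floor_eval (q r : ℕ) (hq : 0 < q) (hrq : r < q) :
    ⌊(2 * (r : ℚ)) / q⌋ = if 2 * r < q then 0 else 1 := by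
  have hq' : (0:ℚ) < q := by exact_mod_cast hq
  split
  · next h =>
    rw [Int.floor_eq_iff]
    refine ⟨by positivity, ?_⟩
    rw [div_lt_iff₀ hq']
    have : (2*r:ℚ) < q := by exact_mod_cast h
    push_cast; linarith
  · next h =>
    rw [Int.floor_eq_iff]
    constructor
    · rw [le_div_iff₀ hq']
      have : (q:ℚ) ≤ 2*r := by exact_mod_cast (by omega : q ≤ 2*r)
      push_cast; linarith
    · rw [div_lt_iff₀ hq']
      have : (2*r : ℚ) < 2 * q := by exact_mod_cast (by omega : 2*r < 2*q)
      push_cast; linarith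

lemma ceil_eval (q j : ℕ) (hq : 0 < q) (h1 : 1 ≤ j) (hjq : j < q) (hne : 2 * j ≠ q) :
    ⌈(2 * (j : ℚ)) / q⌉ = if 2 * j < q then 1 else 2 := by
  have hq' : (0:ℚ) < q := by exact_mod_cast hq
  have hj' : (0:ℚ) < j := by exact_mod_cast h1
  split
  · next h =>
    rw [Int.ceil_eq_iff]
    constructor
    · push_cast
      have : (0:ℚ) < 2*j/q := by positivity
      linarith
    · rw [div_le_iff₀ hq']
      have : (2*j:ℚ) ≤ q := by exact_mod_cast (by omega : 2*j ≤ q)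
      push_cast; linarith
  · next h =>
    rw [Int.ceil_eq_iff]
    constructor
    · rw [lt_div_iff₀ hq']
      have : (q:ℚ) < 2 * j := by exact_mod_cast (by omega : q < 2*j)
      push_cast; linarith
    · rw [div_le_iff₀ hq']
      have : (2*j:ℚ) ≤ 2*q := by exact_mod_cast (by omega : 2*j ≤ 2*q)
      push_cast; linarith

lemma stmt_2_aux (q : ℕ) (hq3 : 3 ≤ q) (hqodd : Odd q)
    (f : ℕ → ℤ)
    (hf1 : ∀ k : ℕ, 1 ≤ k → ¬ q ∣ k →
      f k = 2 * ((q : ℤ) + 2) * ((k / q : ℕ) : ℤ) + 2 * ((k % q : ℕ) : ℤ)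
              + 2 * ⌈(2 * ((k % q : ℕ) : ℚ)) / q⌉ - 1)
    (hf2 : ∀ k : ℕ, 1 ≤ k → q ∣ k →
      f k = 2 * ((q : ℤ) + 2) * ((k / q : ℕ) : ℤ) - 1) :
    ∀ E : ℕ, (q : ℤ) * ∑ k ∈ Finset.Icc 1 E, f k
      = ((q : ℤ) + 2) * (E : ℤ) ^ 2 + (q : ℤ) * ((q : ℤ) + 1) * ((E / q : ℕ) : ℤ)
          - 2 * ((E % q : ℕ) : ℤ) ^ 2 + 2 * (q : ℤ) * ((E % q : ℕ) : ℤ)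
          + (q : ℤ) * ⌊(2 * ((E % q : ℕ) : ℚ)) / q⌋ * (2 * ((E % q : ℕ) : ℤ) - (q : ℤ) + 1) := by
  intro E
  have hq0 : 0 < q := by omega
  induction E with
  | zero => simp
  | succ E ih =>
    rw [Finset.sum_Icc_succ_top (by omega : 1 ≤ E + 1), mul_add, ih]
    set m := E / q with hm
    set r := E % q with hr
    have hErm : E = q * m + r := (Nat.div_add_mod E q).symm
    have hrq : r < q := Nat.mod_lt _ hq0
    have hE' : (E : ℤ) = (q:ℤ) * m + r := by exact_mod_cast hErm
    by_cases hdvd : q ∣ (E + 1)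
    · have h1 : q ∣ r + 1 := by
        have : q ∣ q * m + (r + 1) := by rwa [hErm, Nat.add_assoc] at hdvd
        exact (Nat.dvd_add_right ⟨m, rfl⟩).mp this
      have hr1 : r + 1 = q := Nat.le_antisymm hrq (Nat.le_of_dvd (by omega) h1)
      have hE1 : E + 1 = q * (m + 1) := by
        rw [hErm, Nat.mul_add, Nat.mul_one]; omega
      have hmod : (E + 1) % q = 0 := Nat.dvd_iff_mod_eq_zero.mp hdvd
      have hdiv2 : (E + 1) / q = m + 1 := by
        rw [hE1, Nat.mul_div_cancel_left _ hq0]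
      rw [hf2 (E+1) (by omega) hdvd, hdiv2, hmod]
      rw [floor_eval q r hq0 hrq, if_neg (by omega : ¬ 2 * r < q)]
      have hr' : (r : ℤ) = (q:ℤ) - 1 := by omega
      push_cast
      rw [hE', hr']
      ring_nf
      rw [Int.floor_zero]; ring
    · have hrlt : r + 1 < q := by
        rcases Nat.lt_or_ge (r+1) q with h | h
        · exact h
        · exfalso
          have : r + 1 = q := by omega
          exact hdvd ⟨m + 1, by rw [hErm, Nat.mul_add, Nat.mul_one]; omega⟩
      have hmod : (E + 1) % q = r + 1 := by
        rw [hErm, Nat.add_assoc, Nat.mul_add_mod, Nat.mod_eq_of_lt hrlt]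
      have hdiv2 : (E + 1) / q = m := by
        rw [hErm, Nat.add_assoc, Nat.mul_add_div hq0, Nat.div_eq_of_lt hrlt, Nat.add_zero]
      have hne : 2 * (r + 1) ≠ q := by
        obtain ⟨t, ht⟩ := hqodd; omega
      rw [hf1 (E+1) (by omega) hdvd, hdiv2, hmod]
      rw [floor_eval q r hq0 hrq, floor_eval q (r+1) hq0 hrlt,
        ceil_eval q (r+1) hq0 (by omega) hrlt hne]
      by_cases h1 : 2 * (r + 1) < q
      · rw [if_pos h1, if_pos h1, if_pos (by omega : 2 * r < q)]
        push_cast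
        rw [hE']; ring
      · by_cases h2 : q < 2 * r
        · rw [if_neg h1, if_neg h1, if_neg (by omega : ¬ 2 * r < q)]
          push_cast
          rw [hE']; ring
        · have hqe : (q : ℤ) = 2 * r + 1 := by
            obtain ⟨t, ht⟩ := hqodd; omega
          rw [if_neg h1, if_neg h1, if_pos (by omega : 2 * r < q)]
          push_cast
          rw [hE', hqe]; ring

theorem stmt_2 (q m r E : ℕ) (hq3 : 3 ≤ q) (hqodd : Odd q)
    (hEmr : E = q * m + r) (hr : r ≤ q - 1)
    (f : ℕ → ℤ)
    (hf1 : ∀ k : ℕ, 1 ≤ k → ¬ q ∣ k →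
      f k = 2 * ((q : ℤ) + 2) * ((k / q : ℕ) : ℤ) + 2 * ((k % q : ℕ) : ℤ)
              + 2 * ⌈(2 * ((k % q : ℕ) : ℚ)) / q⌉ - 1)
    (hf2 : ∀ k : ℕ, 1 ≤ k → q ∣ k →
      f k = 2 * ((q : ℤ) + 2) * ((k / q : ℕ) : ℤ) - 1) :
    (q : ℤ) * ∑ k ∈ Finset.Icc 1 E, f k
      = ((q : ℤ) + 2) * (E : ℤ) ^ 2 + (q : ℤ) * ((q : ℤ) + 1) * m
          - 2 * (r : ℤ) ^ 2 + 2 * (q : ℤ) * r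
          + (q : ℤ) * ⌊(2 * (r : ℚ)) / q⌋ * (2 * (r : ℤ) - q + 1) := by
  have hq0 : 0 < q := by omega
  have hrq : r < q := by omega
  have hdiv : E / q = m := by
    rw [hEmr, Nat.mul_add_div hq0, Nat.div_eq_of_lt hrq, Nat.add_zero]
  have hmod : E % q = r := by
    rw [hEmr, Nat.mul_add_mod, Nat.mod_eq_of_lt hrq]
  have := stmt_2_aux q hq3 hqodd f hf1 hf2 E
  rw [hdiv, hmod] at this
  exact this
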